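/- Let R = K⟨x,y⟩/(xy−1), p a nonzero polynomial in x of degree d, and p*(y) = p(x)y^d. Then R/Rp* is isomorphic as a left R-module to K[X,X^{-1}]/(p), the quotient of the Laurent polynomials by the ideal generated by p, regarded as an R-module via R → R/I ≅ K[X,X^{-1}]. -/

import Mathlib

set_option synthInstance.maxHeartbeats 1000000
set_option maxHeartbeats 1000000


noncomputable section

/-- The defining relation of the Toeplitz/Jacobson algebra: `x * y = 1`. -/
inductive ToeplitzRel (K : Type*) [Field K] :
    FreeAlgebra K (Fin 2) → FreeAlgebra K (Fin 2) → Prop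
  | rel : ToeplitzRel K (FreeAlgebra.ι K 0 * FreeAlgebra.ι K 1) 1

/-- The Toeplitz/Jacobson algebra `R = K⟨x,y⟩/(xy-1)`. -/
abbrev Toeplitz (K : Type*) [Field K] := RingQuot (ToeplitzRel K)

variable (K : Type*) [Field K]

/-- The image of the generator `x` in `R`. -/
def tx : Toeplitz K := RingQuot.mkAlgHom K (ToeplitzRel K) (FreeAlgebra.ι K 0)

/-- The image of the generator `y` in `R`. -/
def ty : Toeplitz K := RingQuot.mkAlgHom K (ToeplitzRel K) (FreeAlgebra.ι K 1)

/-- `f n = y^(n-1) x^(n-1) - y^n x^n`. -/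
def tf (n : ℕ) : Toeplitz K := ty K ^ (n-1) * tx K ^ (n-1) - ty K ^ n * tx K ^ n

variable {K}

lemma hxy : tx K * ty K = 1 := by
  have := RingQuot.mkAlgHom_rel K (ToeplitzRel.rel (K := K))
  simpa [tx, ty, map_mul] using this

lemma hxyk (k : ℕ) : tx K ^ k * ty K ^ k = 1 := by
  induction k with
  | zero => simp
  | succ n ih =>
    rw [pow_succ, pow_succ']
    calc tx K ^ n * tx K * (ty K * ty K ^ n)
        = tx K ^ n * (tx K * ty K) * ty K ^ n := by simp [mul_assoc]
      _ = 1 := by rw [hxy]; simpa using ih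

lemma hxy_le {a b : ℕ} (h : a ≤ b) : tx K ^ a * ty K ^ b = ty K ^ (b - a) := by
  calc tx K ^ a * ty K ^ b = tx K ^ a * ty K ^ a * ty K ^ (b - a) := by
        rw [mul_assoc, ← pow_add]; congr 2; omega
    _ = ty K ^ (b - a) := by rw [hxyk, one_mul]

lemma hxy_ge {a b : ℕ} (h : b ≤ a) : tx K ^ a * ty K ^ b = tx K ^ (a - b) := by
  calc tx K ^ a * ty K ^ b = tx K ^ (a - b) * (tx K ^ b * ty K ^ b) := by
        rw [← mul_assoc, ← pow_add]; congr 2; omega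
    _ = tx K ^ (a - b) := by rw [hxyk, mul_one]

lemma htop : Algebra.adjoin K {tx K, ty K} = ⊤ := by
  have h1 : (Set.range (FreeAlgebra.ι K (X := Fin 2)))
      = {FreeAlgebra.ι K 0, FreeAlgebra.ι K 1} := by
    ext z; constructor
    · rintro ⟨i, rfl⟩; fin_cases i <;> simp
    · rintro (rfl | rfl) <;> [exact ⟨0, rfl⟩; exact ⟨1, rfl⟩]
  have h2 := FreeAlgebra.adjoin_range_ι K (Fin 2)
  have h3 : (Algebra.adjoin K (Set.range (FreeAlgebra.ι K (X := Fin 2)))).map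
      (RingQuot.mkAlgHom K (ToeplitzRel K)) = ⊤ := by
    rw [h2, Algebra.map_top, AlgHom.range_eq_top]
    exact RingQuot.mkAlgHom_surjective K _
  rw [AlgHom.map_adjoin, h1] at h3
  rw [← h3]; congr 1
  simp [Set.image_insert_eq, tx, ty]

variable (K) in
/-- the generator p* -/
def Tq (p : Polynomial K) : Toeplitz K :=
  Polynomial.aeval (tx K) p * ty K ^ p.natDegree

variable (K) in
def TN (p : Polynomial K) : Submodule (Toeplitz K) (Toeplitz K) :=
  Submodule.span (Toeplitz K) {Tq K p}

variable {p : Polynomial K}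

lemma hq : Tq K p = ∑ i ∈ Finset.range (p.natDegree + 1),
    p.coeff i • ty K ^ (p.natDegree - i) := by
  rw [Tq, Polynomial.aeval_eq_sum_range, Finset.sum_mul]
  refine Finset.sum_congr rfl fun i hi => ?_
  simp only [Finset.mem_range] at hi
  rw [smul_mul_assoc, hxy_le (by omega)]

lemma hPx (n : ℕ) :
    Polynomial.aeval (tx K) p * tx K ^ n = tx K ^ (p.natDegree + n) * Tq K p := by
  rw [hq, Finset.mul_sum, Polynomial.aeval_eq_sum_range, Finset.sum_mul]
  refine Finset.sum_congr rfl fun i hi => ?_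
  simp only [Finset.mem_range] at hi
  rw [smul_mul_assoc, ← pow_add, mul_smul_comm, hxy_ge (by omega)]
  congr 2
  omega

lemma hq_mem : Tq K p ∈ TN K p := Submodule.mem_span_singleton_self _

lemma smul_hq_mem (r : Toeplitz K) : r * Tq K p ∈ TN K p := by
  simpa [smul_eq_mul] using Submodule.smul_mem (TN K p) r hq_mem

lemma hPx_mem (n : ℕ) : Polynomial.aeval (tx K) p * tx K ^ n ∈ TN K p := by
  rw [hPx]; exact smul_hq_mem _

lemma hterm (b i : ℕ) (hi : i ≤ p.natDegree) :
    tx K ^ b * ty K ^ (p.natDegree - i)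
      - ty K * (tx K ^ (b + 1) * ty K ^ (p.natDegree - i))
    = if p.natDegree ≤ b + i then
        (1 - ty K * tx K) * tx K ^ (b + i - p.natDegree) else 0 := by
  set d := p.natDegree
  by_cases h : d ≤ b + i
  · rw [if_pos h, hxy_ge (by omega), hxy_ge (by omega)]
    have e1 : b - (d - i) = b + i - d := by omega
    have e2 : b + 1 - (d - i) = (b + i - d) + 1 := by omega
    rw [e1, e2, pow_succ', sub_mul, one_mul, mul_assoc]
  · rw [if_neg h, hxy_le (by omega), hxy_le (by omega)]
    have e2 : d - i - b = (d - i - (b + 1)) + 1 := by omega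
    rw [e2, ← pow_succ']
    exact sub_self _

lemma hsum (b : ℕ) :
    tx K ^ b * Tq K p - ty K * (tx K ^ (b + 1) * Tq K p)
    = ∑ i ∈ Finset.range (p.natDegree + 1), p.coeff i •
        (if p.natDegree ≤ b + i then
          (1 - ty K * tx K) * tx K ^ (b + i - p.natDegree) else 0) := by
  rw [hq, Finset.mul_sum, Finset.mul_sum, Finset.mul_sum, ← Finset.sum_sub_distrib]
  refine Finset.sum_congr rfl fun i hi => ?_
  simp only [Finset.mem_range] at hi
  rw [mul_smul_comm, mul_smul_comm, mul_smul_comm, ← hterm b i (by omega),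
    smul_sub]

lemma keyU (hp : p ≠ 0) (b : ℕ) : (1 - ty K * tx K) * tx K ^ b ∈ TN K p := by
  induction b using Nat.strong_induction_on with
  | _ b ih =>
    have hmem : tx K ^ b * Tq K p - ty K * (tx K ^ (b + 1) * Tq K p) ∈ TN K p :=
      sub_mem (smul_hq_mem _) (by simpa [mul_assoc] using smul_hq_mem (ty K * tx K ^ (b+1)))
    rw [hsum b, Finset.sum_range_succ] at hmem
    have hd : (if p.natDegree ≤ b + p.natDegree then
        (1 - ty K * tx K) * tx K ^ (b + p.natDegree - p.natDegree) else 0)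
        = (1 - ty K * tx K) * tx K ^ b := by
      have e : b + p.natDegree - p.natDegree = b := by omega
      rw [if_pos (by omega), e]
    rw [hd] at hmem
    have hrest : ∑ i ∈ Finset.range p.natDegree, p.coeff i •
        (if p.natDegree ≤ b + i then
          (1 - ty K * tx K) * tx K ^ (b + i - p.natDegree) else 0) ∈ TN K p := by
      refine Submodule.sum_mem _ fun i hi => ?_
      simp only [Finset.mem_range] at hi
      by_cases h : p.natDegree ≤ b + i
      · rw [if_pos h]
        exact Submodule.smul_of_tower_mem _ _ (ih (b + i - p.natDegree) (by omega))
      · rw [if_neg h, smul_zero]; exact zero_mem _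
    have hlead : p.coeff p.natDegree • ((1 - ty K * tx K) * tx K ^ b) ∈ TN K p := by
      have := sub_mem hmem hrest
      rwa [add_sub_cancel_left] at this
    have hc : p.coeff p.natDegree ≠ 0 := by
      have := Polynomial.leadingCoeff_ne_zero.mpr hp
      rwa [Polynomial.leadingCoeff] at this
    have := Submodule.smul_of_tower_mem (TN K p) (p.coeff p.natDegree)⁻¹ hlead
    rwa [inv_smul_smul₀ hc] at this

variable (K) in
def TE : Submodule K (Toeplitz K) :=
  Submodule.span K {r | ∃ a b : ℕ, r = ty K ^ a * tx K ^ b}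

lemma monE (a b : ℕ) : ty K ^ a * tx K ^ b ∈ TE K :=
  Submodule.subset_span ⟨a, b, rfl⟩

lemma mulE : ∀ r : Toeplitz K, ∀ s ∈ TE K, r * s ∈ TE K := by
  have key : ∀ r ∈ Algebra.adjoin K {tx K, ty K}, ∀ s ∈ TE K, r * s ∈ TE K := by
    intro r hr
    induction hr using Algebra.adjoin_induction with
    | mem z hz =>
      intro s hs
      induction hs using Submodule.span_induction with
      | mem w hw =>
        obtain ⟨a, b, rfl⟩ := hw
        rcases hz with rfl | rfl
        · cases a with
          | zero => simpa [← pow_succ'] using monE 0 (b+1)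
          | succ a' =>
            have : tx K * (ty K ^ (a' + 1) * tx K ^ b)
                = ty K ^ a' * tx K ^ b := by
              rw [pow_succ', ← mul_assoc, ← mul_assoc]
              rw [show tx K * ty K = 1 from hxy, one_mul]
            rw [this]; exact monE _ _
        · rw [← mul_assoc, ← pow_succ']; exact monE _ _
      | zero => simpa using (TE K).zero_mem
      | add w₁ w₂ h₁ h₂ ih₁ ih₂ => rw [mul_add]; exact add_mem ih₁ ih₂
      | smul c w hw ihw => rw [mul_smul_comm]; exact Submodule.smul_mem _ _ ihw
    | algebraMap c =>
      intro s hs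
      rw [← Algebra.smul_def]
      exact Submodule.smul_mem _ _ hs
    | add r₁ r₂ h₁ h₂ ih₁ ih₂ =>
      intro s hs
      rw [add_mul]; exact add_mem (ih₁ s hs) (ih₂ s hs)
    | mul r₁ r₂ h₁ h₂ ih₁ ih₂ =>
      intro s hs
      rw [mul_assoc]; exact ih₁ _ (ih₂ s hs)
  intro r
  exact key r (by rw [htop]; trivial)

lemma memE (r : Toeplitz K) : r ∈ TE K := by
  have := mulE r 1 (by simpa using monE 0 0)
  simpa using this

lemma YXfull (hp : p ≠ 0) (s : Toeplitz K) : (1 - ty K * tx K) * s ∈ TN K p := by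
  have hs := memE s
  induction hs using Submodule.span_induction with
  | mem w hw =>
    obtain ⟨a, b, rfl⟩ := hw
    cases a with
    | zero => simpa using keyU hp b
    | succ a' =>
      have h0 : (1 - ty K * tx K) * ty K = 0 := by
        rw [sub_mul, one_mul, mul_assoc, hxy, mul_one, sub_self]
      have : (1 - ty K * tx K) * (ty K ^ (a' + 1) * tx K ^ b)
          = ((1 - ty K * tx K) * ty K) * (ty K ^ a' * tx K ^ b) := by
        rw [pow_succ', ← mul_assoc, ← mul_assoc, mul_assoc]
      rw [this, h0, zero_mul]; exact zero_mem _
  | zero => rw [mul_zero]; exact zero_mem _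
  | add w₁ w₂ h₁ h₂ ih₁ ih₂ => rw [mul_add]; exact add_mem ih₁ ih₂
  | smul c w hw ihw =>
    rw [mul_smul_comm]; exact Submodule.smul_of_tower_mem _ _ ihw

lemma hyaxa (hp : p ≠ 0) (a : ℕ) (t : Toeplitz K) :
    ty K ^ a * tx K ^ a * t - t ∈ TN K p := by
  induction a with
  | zero => simpa using zero_mem (TN K p)
  | succ n ih =>
    have key : ty K ^ (n+1) * tx K ^ (n+1) * t - ty K ^ n * tx K ^ n * t
        = -(ty K ^ n * ((1 - ty K * tx K) * (tx K ^ n * t))) := by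
      have h' : ty K ^ n * ((1 - ty K * tx K) * (tx K ^ n * t))
          = ty K ^ n * tx K ^ n * t - ty K ^ (n+1) * tx K ^ (n+1) * t := by
        rw [sub_mul, one_mul, mul_sub, pow_succ, pow_succ']
        simp [mul_assoc]
      rw [h', neg_sub]
    have h1 : ty K ^ (n+1) * tx K ^ (n+1) * t - ty K ^ n * tx K ^ n * t ∈ TN K p := by
      rw [key]
      exact neg_mem (by simpa [smul_eq_mul, mul_assoc] using
        Submodule.smul_mem (TN K p) (ty K ^ n) (YXfull hp (tx K ^ n * t)))
    have := add_mem h1 ih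
    simpa using this

lemma xaPya (a : ℕ) :
    tx K ^ a * Polynomial.aeval (tx K) p * ty K ^ a = Polynomial.aeval (tx K) p := by
  rw [Polynomial.aeval_eq_sum_range, Finset.mul_sum, Finset.sum_mul]
  refine Finset.sum_congr rfl fun i hi => ?_
  rw [mul_smul_comm, smul_mul_assoc, ← pow_add, hxy_ge (by omega)]
  congr 2
  omega

lemma PFull (hp : p ≠ 0) (s : Toeplitz K) :
    Polynomial.aeval (tx K) p * s ∈ TN K p := by
  have hs := memE s
  induction hs using Submodule.span_induction with
  | mem w hw =>
    obtain ⟨a, b, rfl⟩ := hw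
    set P := Polynomial.aeval (tx K) p
    have h1 : ty K ^ a * tx K ^ a * (P * (ty K ^ a * tx K ^ b)) ∈ TN K p := by
      have e : ty K ^ a * tx K ^ a * (P * (ty K ^ a * tx K ^ b))
          = ty K ^ a * ((tx K ^ a * P * ty K ^ a) * tx K ^ b) := by
        noncomm_ring
      rw [e, xaPya, hPx b]
      simpa [smul_eq_mul, mul_assoc] using
        Submodule.smul_mem (TN K p) (ty K ^ a * tx K ^ (p.natDegree + b)) hq_mem
    have h2 := hyaxa hp a (P * (ty K ^ a * tx K ^ b))
    have := sub_mem h1 h2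
    simpa using this
  | zero => rw [mul_zero]; exact zero_mem _
  | add w₁ w₂ h₁ h₂ ih₁ ih₂ => rw [mul_add]; exact add_mem ih₁ ih₂
  | smul c w hw ihw =>
    rw [mul_smul_comm]; exact Submodule.smul_of_tower_mem _ _ ihw

variable (K) in
def tu (n : ℤ) : Toeplitz K :=
  if 0 ≤ n then tx K ^ n.toNat else ty K ^ (-n).toNat

variable (K) in
def psi (p : Polynomial K) : LaurentPolynomial K →+ (Toeplitz K ⧸ TN K p) :=
  AddMonoidHom.comp (Finsupp.liftAddHom (fun n =>
    { toFun := fun c : K =>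
        Submodule.Quotient.mk (algebraMap K (Toeplitz K) c * tu K n)
      map_zero' := by simp
      map_add' := fun a b => by simp only [map_add, add_mul, Submodule.Quotient.mk_add] }))
    (AddMonoidAlgebra.coeffAddEquiv (R := K) (M := ℤ)).toAddMonoidHom

lemma psi_single (n : ℤ) (c : K) :
    psi K p (AddMonoidAlgebra.single n c)
      = Submodule.Quotient.mk (algebraMap K (Toeplitz K) c * tu K n) := by
  rw [psi, AddMonoidHom.comp_apply]
  exact Finsupp.liftAddHom_apply_single _ n c

lemma hxu (n : ℤ) : tx K * tu K n = tu K (n + 1) := by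
  unfold tu
  rcases le_or_gt 0 n with h | h
  · rw [if_pos h, if_pos (by omega)]
    have e : (n + 1).toNat = n.toNat + 1 := by omega
    rw [e, pow_succ']
  · rw [if_neg (by omega)]
    rcases eq_or_lt_of_le (show n ≤ -1 by omega) with rfl | h2
    · norm_num
      exact hxy
    · rw [if_neg (by omega)]
      have e : (-n).toNat = 1 + (-(n+1)).toNat := by omega
      rw [e, ← pow_one (tx K), pow_add, ← mul_assoc, hxyk, one_mul]

lemma hyu (hp : p ≠ 0) (n : ℤ) :
    (Submodule.Quotient.mk (ty K * tu K n) : Toeplitz K ⧸ TN K p)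
      = Submodule.Quotient.mk (tu K (n - 1)) := by
  unfold tu
  rcases lt_trichotomy n 0 with h | rfl | h
  · rw [if_neg (by omega), if_neg (by omega)]
    have e : (-(n-1)).toNat = (-n).toNat + 1 := by omega
    rw [e, pow_succ']
  · norm_num
  · rw [if_pos (by omega), if_pos (by omega)]
    rw [Submodule.Quotient.eq]
    have e : n.toNat = (n-1).toNat + 1 := by omega
    have key : ty K * tx K ^ n.toNat - tx K ^ (n-1).toNat
        = -((1 - ty K * tx K) * tx K ^ (n-1).toNat) := by
      rw [e, pow_succ', sub_mul, one_mul, neg_sub, mul_assoc]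
    rw [key]
    exact neg_mem (keyU hp _)

open LaurentPolynomial in
lemma psi_CT (n : ℤ) (a : K) :
    psi K p (C a * T n) = Submodule.Quotient.mk (algebraMap K (Toeplitz K) a * tu K n) := by
  rw [← LaurentPolynomial.single_eq_C_mul_T, psi_single]

open LaurentPolynomial in
lemma psiP2x (z : LaurentPolynomial K) :
    psi K p (LaurentPolynomial.T 1 * z) = tx K • psi K p z := by
  induction z using LaurentPolynomial.induction_on' with
  | add f g hf hg => rw [mul_add, map_add, map_add, smul_add, hf, hg]
  | C_mul_T n a =>
    have h1 : T 1 * (C a * T n) = C a * T (n + 1) := by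
      rw [T_add]; ring
    rw [h1, psi_CT, psi_CT, ← Submodule.Quotient.mk_smul, smul_eq_mul]
    have h2 : tx K * (algebraMap K (Toeplitz K) a * tu K n)
        = algebraMap K (Toeplitz K) a * (tx K * tu K n) := by
      rw [← mul_assoc, ← Algebra.commutes, mul_assoc]
    rw [h2, hxu]

open LaurentPolynomial in
lemma psiP2y (hp : p ≠ 0) (z : LaurentPolynomial K) :
    psi K p (LaurentPolynomial.T (-1) * z) = ty K • psi K p z := by
  induction z using LaurentPolynomial.induction_on' with
  | add f g hf hg => rw [mul_add, map_add, map_add, smul_add, hf, hg]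
  | C_mul_T n a =>
    have h1 : T (-1) * (C a * T n) = C a * T (n - 1) := by
      rw [T_sub]; ring
    rw [h1, psi_CT, psi_CT, ← Submodule.Quotient.mk_smul, smul_eq_mul]
    have h2 : ty K * (algebraMap K (Toeplitz K) a * tu K n)
        = algebraMap K (Toeplitz K) a * (ty K * tu K n) := by
      rw [← mul_assoc, ← Algebra.commutes, mul_assoc]
    rw [h2, Submodule.Quotient.eq]
    have h3 := (Submodule.Quotient.eq (TN K p)).mp (hyu hp n)
    have h4 : algebraMap K (Toeplitz K) a * tu K (n - 1)
          - algebraMap K (Toeplitz K) a * (ty K * tu K n)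
        = -(algebraMap K (Toeplitz K) a • (ty K * tu K n - tu K (n - 1))) := by
      rw [smul_eq_mul, mul_sub, neg_sub]
    rw [h4]
    exact neg_mem (Submodule.smul_mem _ _ h3)

open LaurentPolynomial in
lemma psiP2c (c : K) (z : LaurentPolynomial K) :
    psi K p ((C c : LaurentPolynomial K) * z)
      = algebraMap K (Toeplitz K) c • psi K p z := by
  induction z using LaurentPolynomial.induction_on' with
  | add f g hf hg => rw [mul_add, map_add, map_add, smul_add, hf, hg]
  | C_mul_T n a =>
    have h1 : (C c : LaurentPolynomial K) * (C a * T n) = C (c * a) * T n := by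
      rw [map_mul]; ring
    rw [h1, psi_CT, psi_CT, ← Submodule.Quotient.mk_smul, smul_eq_mul]
    congr 1
    rw [map_mul, mul_assoc]

open LaurentPolynomial in
lemma psiP3 (hp : p ≠ 0) (φ : Toeplitz K →ₐ[K] LaurentPolynomial K)
    (hx : φ (tx K) = LaurentPolynomial.T 1)
    (hy : φ (ty K) = LaurentPolynomial.T (-1))
    (r : Toeplitz K) (z : LaurentPolynomial K) :
    psi K p (φ r * z) = r • psi K p z := by
  have hr : r ∈ Algebra.adjoin K {tx K, ty K} := by rw [htop]; trivial
  induction hr using Algebra.adjoin_induction generalizing z with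
  | mem w hw =>
    rcases hw with rfl | rfl
    · rw [hx]; exact psiP2x z
    · rw [hy]; exact psiP2y hp z
  | algebraMap c =>
    rw [AlgHom.commutes]
    have h1 : algebraMap K (LaurentPolynomial K) c = (C c : LaurentPolynomial K) := rfl
    rw [h1]
    exact psiP2c c z
  | add r₁ r₂ h₁ h₂ ih₁ ih₂ =>
    rw [map_add, add_mul, map_add, add_smul, ih₁, ih₂]
  | mul r₁ r₂ h₁ h₂ ih₁ ih₂ =>
    rw [map_mul φ r₁ r₂, mul_assoc, ih₁, ih₂, mul_smul]

open LaurentPolynomial in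
lemma psiP5 (hp : p ≠ 0) (φ : Toeplitz K →ₐ[K] LaurentPolynomial K)
    (hx : φ (tx K) = LaurentPolynomial.T 1)
    (hy : φ (ty K) = LaurentPolynomial.T (-1)) (r : Toeplitz K) :
    psi K p (φ r) = Submodule.Quotient.mk r := by
  have h1 : psi K p (φ r) = psi K p (φ r * (C (1:K) * T 0)) := by
    rw [T_zero, map_one, mul_one, mul_one]
  rw [h1, psiP3 hp φ hx hy, psi_CT, ← Submodule.Quotient.mk_smul, smul_eq_mul]
  congr 1
  have h2 : tu K 0 = 1 := by rw [tu, if_pos le_rfl]; simp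
  rw [h2, map_one, one_mul, mul_one]

open LaurentPolynomial in
lemma haevalT (f : Polynomial K) :
    Polynomial.aeval (T 1 : LaurentPolynomial K) f = f.toLaurent := by
  have h : (Polynomial.aeval (T 1 : LaurentPolynomial K) : Polynomial K →ₐ[K] _)
      = Polynomial.toLaurentAlg := by
    apply Polynomial.algHom_ext
    simp [Polynomial.toLaurentAlg]
  rw [h]; rfl

lemma hphiP (φ : Toeplitz K →ₐ[K] LaurentPolynomial K)
    (hx : φ (tx K) = LaurentPolynomial.T 1) :
    φ (Polynomial.aeval (tx K) p) = p.toLaurent := by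
  rw [← Polynomial.aeval_algHom_apply, hx, haevalT]

open LaurentPolynomial in
lemma hphiTq (φ : Toeplitz K →ₐ[K] LaurentPolynomial K)
    (hx : φ (tx K) = LaurentPolynomial.T 1)
    (hy : φ (ty K) = LaurentPolynomial.T (-1)) :
    φ (Tq K p) = p.toLaurent * T ((p.natDegree : ℤ) * -1) := by
  rw [Tq, map_mul, map_pow, hy, T_pow, hphiP φ hx]

open LaurentPolynomial in
lemma hphisurj (φ : Toeplitz K →ₐ[K] LaurentPolynomial K)
    (hx : φ (tx K) = LaurentPolynomial.T 1)
    (hy : φ (ty K) = LaurentPolynomial.T (-1)) :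
    Function.Surjective φ := by
  intro z
  obtain ⟨n, f', hf⟩ := z.exists_T_pow
  refine ⟨Polynomial.aeval (tx K) f' * ty K ^ n, ?_⟩
  rw [map_mul, map_pow, hy, T_pow, ← Polynomial.aeval_algHom_apply, hx, haevalT,
    hf, mul_assoc, ← T_add]
  simp

open LaurentPolynomial in
lemma hker (hp : p ≠ 0) (φ : Toeplitz K →ₐ[K] LaurentPolynomial K)
    (hx : φ (tx K) = LaurentPolynomial.T 1)
    (hy : φ (ty K) = LaurentPolynomial.T (-1)) (r : Toeplitz K)
    (h : φ r ∈ Ideal.span {p.toLaurent}) :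
    (Submodule.Quotient.mk r : Toeplitz K ⧸ TN K p) = 0 := by
  obtain ⟨a, ha⟩ := Ideal.mem_span_singleton'.mp h
  have h2 : φ r = φ (Polynomial.aeval (tx K) p) * a := by
    rw [hphiP φ hx, mul_comm, ha]
  rw [← psiP5 hp φ hx hy, h2, psiP3 hp φ hx hy]
  obtain ⟨s, hs⟩ := Submodule.Quotient.mk_surjective (TN K p) (psi K p a)
  rw [← hs, ← Submodule.Quotient.mk_smul, smul_eq_mul]
  exact (Submodule.Quotient.mk_eq_zero _).mpr (PFull hp s)


variable (K)

/-- For a nonzero polynomial `p` of degree `d` and `p*(y) = p(x) y^d`, the left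
`R`-module `R/Rp*` is isomorphic to `K[X,X⁻¹]/(p)`, where the `R`-action on the
latter is via the map `R → R/I ≅ K[X,X⁻¹]`, `x ↦ X`, `y ↦ X⁻¹`. -/
theorem toeplitz_quotient_pstar (p : Polynomial K) (hp : p ≠ 0)
    (φ : Toeplitz K →ₐ[K] LaurentPolynomial K)
    (hx : φ (tx K) = LaurentPolynomial.T 1)
    (hy : φ (ty K) = LaurentPolynomial.T (-1)) :
    ∃ e : (Toeplitz K ⧸ Submodule.span (Toeplitz K)
            {Polynomial.aeval (tx K) p * ty K ^ p.natDegree}) ≃+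
          (LaurentPolynomial K ⧸ Ideal.span {Polynomial.toLaurent p}),
      ∀ (r : Toeplitz K) (m : Toeplitz K ⧸ Submodule.span (Toeplitz K)
            {Polynomial.aeval (tx K) p * ty K ^ p.natDegree}),
        e (r • m) = φ r • e m := by
  let I : Ideal (LaurentPolynomial K) := Ideal.span {Polynomial.toLaurent p}
  let Φ : Toeplitz K →+* (LaurentPolynomial K ⧸ I) :=
    (Ideal.Quotient.mk I).comp φ.toRingHom
  let flin : Toeplitz K →ₛₗ[Φ] (LaurentPolynomial K ⧸ I) :=
    { toFun := Φ
      map_add' := fun a b => map_add Φ a b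
      map_smul' := fun r s => by
        simp only [smul_eq_mul, map_mul, RingHom.id_apply] }
  have hle : TN K p ≤ LinearMap.ker flin := by
    intro r hr
    obtain ⟨c, rfl⟩ := Submodule.mem_span_singleton.mp hr
    have : flin (c • Tq K p) = Φ c * Φ (Tq K p) := by
      rw [smul_eq_mul]; exact map_mul Φ c (Tq K p)
    rw [LinearMap.mem_ker, this]
    have hTq : Φ (Tq K p) = 0 := by
      show Ideal.Quotient.mk I (φ (Tq K p)) = 0
      rw [hphiTq φ hx hy, Ideal.Quotient.eq_zero_iff_mem]
      exact Ideal.mul_mem_right _ _ (Ideal.subset_span rfl)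
    rw [hTq, mul_zero]
  let fbar := Submodule.liftQ (TN K p) flin hle
  have hfbar : ∀ r : Toeplitz K,
      fbar (Submodule.Quotient.mk r) = Ideal.Quotient.mk I (φ r) := fun r => rfl
  have hinj : Function.Injective fbar := by
    rw [injective_iff_map_eq_zero]
    intro m hm
    obtain ⟨r, rfl⟩ := Submodule.Quotient.mk_surjective _ m
    rw [hfbar] at hm
    exact hker hp φ hx hy r (Ideal.Quotient.eq_zero_iff_mem.mp hm)
  have hsurj : Function.Surjective fbar := by
    intro w
    obtain ⟨z, rfl⟩ := Ideal.Quotient.mk_surjective w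
    obtain ⟨r, rfl⟩ := hphisurj φ hx hy z
    exact ⟨Submodule.Quotient.mk r, hfbar r⟩
  refine ⟨AddEquiv.ofBijective fbar ⟨hinj, hsurj⟩, ?_⟩
  intro r m
  obtain ⟨s, rfl⟩ := Submodule.Quotient.mk_surjective _ m
  have h1 : (AddEquiv.ofBijective fbar ⟨hinj, hsurj⟩) (r • Submodule.Quotient.mk s)
      = Ideal.Quotient.mk I (φ (r * s)) := by
    rw [← Submodule.Quotient.mk_smul, smul_eq_mul]
    exact hfbar (r * s)
  have h2 : (AddEquiv.ofBijective fbar ⟨hinj, hsurj⟩) (Submodule.Quotient.mk s)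
      = Ideal.Quotient.mk I (φ s) := hfbar s
  have h3 : Ideal.Quotient.mk I (φ (r * s)) = φ r • Ideal.Quotient.mk I (φ s) := by
    rw [map_mul]
    rfl
  exact h1.trans (h3.trans (congrArg (fun w => φ r • w) h2.symm))
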